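/- arXiv:2507.13615 — 4 statements merged into one kernel-verified Lean document; each statement's English description precedes it below -/
import Mathlib

section
/- For all t, θ, γ1, γ2 ∈ ℝ, τ ≥ 0, s > 0 and ρ ∈ (−1, 1), the Gaussian integral identity ∫_ℝ φ(u) · (1/s) φ((t − θ − τu)/s) · Φ((γ1 + γ2/s + ρ(t − θ − τu)/s)/√(1 − ρ²)) du = (1/√(τ² + s²)) φ((t − θ)/√(τ² + s²)) · Φ(v(t, s; γ)) holds, where v(t, s; γ) = (γ1 + γ2/s + ρ s (t − θ)/(τ² + s²)) / √(1 − ρ² s²/(τ² + s²)). -/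
open MeasureTheory ProbabilityTheory

open scoped NNReal ENNReal

set_option maxHeartbeats 1000000

/-- Standard normal distribution function `Φ`. -/
noncomputable def stdGaussianCDF (x : ℝ) : ℝ :=
  ((gaussianReal 0 1) (Set.Iic x)).toReal

/-- Standard normal density `φ`. -/
noncomputable def stdGaussianPDF (x : ℝ) : ℝ :=
  gaussianPDFReal 0 1 x

lemma stdGaussianCDF_nonneg (x : ℝ) : 0 ≤ stdGaussianCDF x := ENNReal.toReal_nonneg

lemma stdGaussianCDF_le_one (x : ℝ) : stdGaussianCDF x ≤ 1 := by
  rw [stdGaussianCDF]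
  have h := prob_le_one (μ := gaussianReal 0 1) (s := Set.Iic x)
  calc ((gaussianReal 0 1) (Set.Iic x)).toReal ≤ (1 : ℝ≥0∞).toReal :=
        ENNReal.toReal_mono ENNReal.one_ne_top h
    _ = 1 := by simp

lemma stdGaussianCDF_monotone : Monotone stdGaussianCDF := fun x y hxy =>
  ENNReal.toReal_mono (measure_ne_top _ _) (measure_mono (Set.Iic_subset_Iic.mpr hxy))

lemma gaussianReal_Iic (μ : ℝ) {v : ℝ≥0} (hv : v ≠ 0) (a : ℝ) :
    ∫ x in Set.Iic a, gaussianPDFReal μ v x = stdGaussianCDF ((a - μ) / Real.sqrt v) := by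
  have hvpos : (0:ℝ) < (v:ℝ) := by exact_mod_cast zero_lt_iff.mpr hv
  have hsv : 0 < Real.sqrt v := Real.sqrt_pos.mpr hvpos
  have hmap : gaussianReal μ v = (gaussianReal 0 1).map (fun x => Real.sqrt v * x + μ) := by
    have h1 := gaussianReal_map_const_mul (μ := 0) (v := 1) (Real.sqrt v)
    have h2 := gaussianReal_map_add_const (μ := Real.sqrt (v:ℝ) * 0)
      (v := ⟨(Real.sqrt (v:ℝ))^2, sq_nonneg _⟩ * 1) μ
    have hco : (fun x : ℝ => Real.sqrt v * x + μ) = (· + μ) ∘ (Real.sqrt (v:ℝ) * ·) := rfl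
    have hveq : (⟨(Real.sqrt (v:ℝ))^2, sq_nonneg _⟩ * 1 : ℝ≥0) = v := by
      exact (mul_one _).trans (NNReal.eq (Real.sq_sqrt hvpos.le))
    rw [hco, ← Measure.map_map (measurable_id'.add_const μ) (measurable_const_mul _), h1,
      gaussianReal_map_add_const]
    congr 1
    · simp
    · apply NNReal.eq
      simp [Real.sq_sqrt hvpos.le]
  have hnn : (0:ℝ) ≤ ∫ x in Set.Iic a, gaussianPDFReal μ v x :=
    integral_nonneg fun x => gaussianPDFReal_nonneg _ _ x
  have happ : gaussianReal μ v (Set.Iic a)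
      = (gaussianReal 0 1) (Set.Iic ((a - μ) / Real.sqrt v)) := by
    rw [hmap, Measure.map_apply ((measurable_id'.const_mul _).add_const μ) measurableSet_Iic]
    congr 1
    ext x
    simp only [Set.mem_preimage, Set.mem_Iic]
    rw [le_div_iff₀ hsv]
    constructor <;> intro h <;> nlinarith
  have := gaussianReal_apply_eq_integral μ hv (Set.Iic a)
  rw [happ] at this
  show _ = ((gaussianReal 0 1) (Set.Iic ((a - μ) / Real.sqrt (v:ℝ)))).toReal
  rw [this, ENNReal.toReal_ofReal hnn]

lemma gaussian_prod_decomp (m b u y V W : ℝ) (hV : 0 < V) (hW : 0 < W) :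
    gaussianPDFReal m V.toNNReal u * gaussianPDFReal (-(b * u)) W.toNNReal y
      = gaussianPDFReal (-(b * m)) (W + b ^ 2 * V).toNNReal y *
        gaussianPDFReal (m - b * V * (y + b * m) / (W + b ^ 2 * V))
          (V * W / (W + b ^ 2 * V)).toNNReal u := by
  have hS : 0 < W + b ^ 2 * V := by positivity
  have hV' : 0 < V * W / (W + b ^ 2 * V) := by positivity
  simp only [gaussianPDFReal]
  rw [Real.coe_toNNReal _ hV.le, Real.coe_toNNReal _ hW.le, Real.coe_toNNReal _ hS.le,
    Real.coe_toNNReal _ hV'.le]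
  rw [mul_mul_mul_comm, mul_mul_mul_comm ((Real.sqrt (2 * Real.pi * (W + b ^ 2 * V)))⁻¹)]
  have hπ : 0 < Real.pi := Real.pi_pos
  congr 1
  · rw [← mul_inv, ← mul_inv, ← Real.sqrt_mul (by positivity), ← Real.sqrt_mul (by positivity)]
    congr 1
    field_simp
  · rw [← Real.exp_add, ← Real.exp_add]
    congr 1
    field_simp
    ring

lemma std_scale (v x : ℝ) (hv : 0 < v) :
    gaussianPDFReal 0 v.toNNReal x
      = (1 / Real.sqrt v) * gaussianPDFReal 0 1 (x / Real.sqrt v) := by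
  have hsv : 0 < Real.sqrt v := Real.sqrt_pos.mpr hv
  have hπ : 0 < Real.pi := Real.pi_pos
  simp only [gaussianPDFReal]
  rw [Real.coe_toNNReal _ hv.le]
  push_cast
  rw [sub_zero, sub_zero, mul_one,
    Real.sqrt_mul (by positivity : (0:ℝ) ≤ 2 * Real.pi), mul_inv,
    div_pow, Real.sq_sqrt hv.le,
    show -(x ^ 2 / v) / (2 * 1) = -x ^ 2 / (2 * v) by ring]
  ring

lemma gaussian_cdf_integral (m a b V : ℝ) (hV : 0 < V) :
    ∫ u, gaussianPDFReal m V.toNNReal u * stdGaussianCDF (a + b * u)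
      = stdGaussianCDF ((a + b * m) / Real.sqrt (1 + b ^ 2 * V)) := by
  have hVne : (V.toNNReal : ℝ≥0) ≠ 0 := (Real.toNNReal_pos.mpr hV).ne'
  have hS : 0 < 1 + b ^ 2 * V := by positivity
  have hSne : ((1 + b ^ 2 * V).toNNReal : ℝ≥0) ≠ 0 := (Real.toNNReal_pos.mpr hS).ne'
  have hV' : 0 < V * 1 / (1 + b ^ 2 * V) := by positivity
  have hV'ne : ((V * 1 / (1 + b ^ 2 * V)).toNNReal : ℝ≥0) ≠ 0 := (Real.toNNReal_pos.mpr hV').ne'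
  have hΦ : ∀ u : ℝ, stdGaussianCDF (a + b * u)
      = ∫ y in Set.Iic a, gaussianPDFReal (-(b * u)) 1 y := by
    intro u
    rw [gaussianReal_Iic _ one_ne_zero]
    norm_num
  have hmeas : AEStronglyMeasurable
      (fun p : ℝ × ℝ => gaussianPDFReal m V.toNNReal p.1 * gaussianPDFReal (-(b * p.1)) 1 p.2)
      (volume.prod (volume.restrict (Set.Iic a))) := by
    apply Measurable.aestronglyMeasurable
    unfold gaussianPDFReal
    fun_prop
  have hint : Integrable
      (fun p : ℝ × ℝ => gaussianPDFReal m V.toNNReal p.1 * gaussianPDFReal (-(b * p.1)) 1 p.2)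
      (volume.prod (volume.restrict (Set.Iic a))) := by
    refine (integrable_prod_iff hmeas).mpr ⟨?_, ?_⟩
    · refine ae_of_all _ fun u => ?_
      exact ((integrable_gaussianPDFReal (-(b * u)) 1).restrict).const_mul
        (gaussianPDFReal m V.toNNReal u)
    · have heq : (fun u => ∫ y in Set.Iic a,
          ‖gaussianPDFReal m V.toNNReal u * gaussianPDFReal (-(b * u)) 1 y‖)
          = fun u => gaussianPDFReal m V.toNNReal u * stdGaussianCDF (a + b * u) := by
        funext u
        rw [hΦ, ← integral_const_mul]
        congr 1
        funext y
        simp only [norm_mul]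
        rw [Real.norm_of_nonneg (gaussianPDFReal_nonneg _ _ _),
          Real.norm_of_nonneg (gaussianPDFReal_nonneg _ _ _)]
      rw [heq]
      refine Integrable.mono' (integrable_gaussianPDFReal m V.toNNReal) ?_ ?_
      · exact ((measurable_gaussianPDFReal m V.toNNReal).mul
          (stdGaussianCDF_monotone.measurable.comp
            (measurable_const.add (measurable_id.const_mul b)))).aestronglyMeasurable
      · refine ae_of_all _ fun u => ?_
        rw [Real.norm_of_nonneg (mul_nonneg (gaussianPDFReal_nonneg _ _ _)
          (stdGaussianCDF_nonneg _))]
        calc gaussianPDFReal m V.toNNReal u * stdGaussianCDF (a + b * u)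
            ≤ gaussianPDFReal m V.toNNReal u * 1 :=
              mul_le_mul_of_nonneg_left (stdGaussianCDF_le_one _)
                (gaussianPDFReal_nonneg _ _ _)
          _ = _ := mul_one _
  calc ∫ u, gaussianPDFReal m V.toNNReal u * stdGaussianCDF (a + b * u)
      = ∫ u, ∫ y in Set.Iic a,
          gaussianPDFReal m V.toNNReal u * gaussianPDFReal (-(b * u)) 1 y := by
        congr 1
        funext u
        rw [hΦ, ← integral_const_mul]
    _ = ∫ y in Set.Iic a, ∫ u,
          gaussianPDFReal m V.toNNReal u * gaussianPDFReal (-(b * u)) 1 y := by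
        exact integral_integral_swap hint
    _ = ∫ y in Set.Iic a, gaussianPDFReal (-(b * m)) (1 + b ^ 2 * V).toNNReal y := by
        congr 1
        funext y
        have hpt : ∀ u : ℝ, gaussianPDFReal m V.toNNReal u * gaussianPDFReal (-(b * u)) 1 y
            = gaussianPDFReal (-(b * m)) (1 + b ^ 2 * V).toNNReal y *
              gaussianPDFReal (m - b * V * (y + b * m) / (1 + b ^ 2 * V))
                (V * 1 / (1 + b ^ 2 * V)).toNNReal u := by
          intro u
          have h := gaussian_prod_decomp m b u y V 1 hV one_pos
          simpa using h
        simp_rw [hpt]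
        rw [integral_const_mul, integral_gaussianPDFReal_eq_one _ hV'ne, mul_one]
    _ = stdGaussianCDF ((a + b * m) / Real.sqrt (1 + b ^ 2 * V)) := by
        rw [gaussianReal_Iic _ hSne]
        rw [Real.coe_toNNReal _ hS.le]
        norm_num

/-- The Gaussian integral identity underlying the computation of the publication
probability given `(θ*, s*)` in the Copas-like selection model. -/
theorem copas_gaussian_integral_identity
    (t θ γ1 γ2 τ s ρ : ℝ) (hτ : 0 ≤ τ) (hs : 0 < s) (hρ : ρ ∈ Set.Ioo (-1 : ℝ) 1) :
    (∫ u : ℝ, stdGaussianPDF u * ((1 / s) * stdGaussianPDF ((t - θ - τ * u) / s)) *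
        stdGaussianCDF ((γ1 + γ2 / s + ρ * (t - θ - τ * u) / s) / Real.sqrt (1 - ρ ^ 2)))
      = (1 / Real.sqrt (τ ^ 2 + s ^ 2)) * stdGaussianPDF ((t - θ) / Real.sqrt (τ ^ 2 + s ^ 2)) *
        stdGaussianCDF ((γ1 + γ2 / s + ρ * s * (t - θ) / (τ ^ 2 + s ^ 2)) /
          Real.sqrt (1 - ρ ^ 2 * s ^ 2 / (τ ^ 2 + s ^ 2))) := by
  obtain ⟨hρ1, hρ2⟩ := hρ
  have hq : 0 < 1 - ρ ^ 2 := by nlinarith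
  have hT : 0 < τ ^ 2 + s ^ 2 := by positivity
  set q := Real.sqrt (1 - ρ ^ 2) with hqdef
  have hqpos : 0 < q := Real.sqrt_pos.mpr hq
  have hq2 : q ^ 2 = 1 - ρ ^ 2 := Real.sq_sqrt hq.le
  set c := t - θ with hc
  set A := (γ1 + γ2 / s + ρ * c / s) / q with hA
  set B := (-(ρ * τ) / s) / q with hB
  set m' := τ * c / (τ ^ 2 + s ^ 2) with hm'
  set V' := s ^ 2 / (τ ^ 2 + s ^ 2) with hV'
  have hV'pos : 0 < V' := by rw [hV']; positivity
  have hkey : ∀ u : ℝ, stdGaussianPDF u * ((1 / s) * stdGaussianPDF ((c - τ * u) / s)) *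
      stdGaussianCDF ((γ1 + γ2 / s + ρ * (c - τ * u) / s) / q)
      = gaussianPDFReal 0 (τ ^ 2 + s ^ 2).toNNReal c *
        (gaussianPDFReal m' V'.toNNReal u * stdGaussianCDF (A + B * u)) := by
    intro u
    have h1 : stdGaussianPDF u = gaussianPDFReal 0 (1:ℝ).toNNReal u := by
      rw [stdGaussianPDF, Real.toNNReal_one]
    have h2 : (1 / s) * stdGaussianPDF ((c - τ * u) / s)
        = gaussianPDFReal (-(-τ * u)) (s ^ 2).toNNReal c := by
      have hss := std_scale (s ^ 2) (c - τ * u) (by positivity)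
      rw [Real.sqrt_sq hs.le] at hss
      rw [stdGaussianPDF, ← hss, show -(-τ * u) = 0 + τ * u by ring, ← gaussianPDFReal_sub]
    have h3 : (γ1 + γ2 / s + ρ * (c - τ * u) / s) / q = A + B * u := by
      rw [hA, hB]; ring
    rw [h1, h2, h3]
    have h := gaussian_prod_decomp 0 (-τ) u c 1 (s ^ 2) one_pos (by positivity)
    rw [show s ^ 2 + (-τ) ^ 2 * 1 = τ ^ 2 + s ^ 2 by ring,
      show -(-τ * 0) = (0:ℝ) by ring,
      show (0 : ℝ) - -τ * 1 * (c + -τ * 0) / (τ ^ 2 + s ^ 2) = τ * c / (τ ^ 2 + s ^ 2) by ring,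
      show (1 : ℝ) * s ^ 2 / (τ ^ 2 + s ^ 2) = s ^ 2 / (τ ^ 2 + s ^ 2) by ring] at h
    rw [h, ← hm', ← hV', mul_assoc]
  have hnum : 0 < 1 - ρ ^ 2 * s ^ 2 / (τ ^ 2 + s ^ 2) := by
    rw [sub_pos, div_lt_one hT]
    nlinarith
  have harg : (A + B * m') / Real.sqrt (1 + B ^ 2 * V')
      = (γ1 + γ2 / s + ρ * s * c / (τ ^ 2 + s ^ 2)) /
        Real.sqrt (1 - ρ ^ 2 * s ^ 2 / (τ ^ 2 + s ^ 2)) := by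
    have h1 : A + B * m' = (γ1 + γ2 / s + ρ * s * c / (τ ^ 2 + s ^ 2)) / q := by
      rw [hA, hB, hm']
      field_simp
      ring
    have h2 : 1 + B ^ 2 * V' = (1 - ρ ^ 2 * s ^ 2 / (τ ^ 2 + s ^ 2)) / (1 - ρ ^ 2) := by
      rw [hB, hV', div_pow, div_pow, hq2]
      field_simp
      ring
    rw [h1, h2, Real.sqrt_div hnum.le, ← hqdef]
    have hy : Real.sqrt (1 - ρ ^ 2 * s ^ 2 / (τ ^ 2 + s ^ 2)) ≠ 0 :=
      (Real.sqrt_pos.mpr hnum).ne'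
    field_simp
  calc (∫ u : ℝ, stdGaussianPDF u * ((1 / s) * stdGaussianPDF ((c - τ * u) / s)) *
        stdGaussianCDF ((γ1 + γ2 / s + ρ * (c - τ * u) / s) / q))
      = ∫ u : ℝ, gaussianPDFReal 0 (τ ^ 2 + s ^ 2).toNNReal c *
          (gaussianPDFReal m' V'.toNNReal u * stdGaussianCDF (A + B * u)) := by
        congr 1
        funext u
        exact hkey u
    _ = gaussianPDFReal 0 (τ ^ 2 + s ^ 2).toNNReal c *
          ∫ u : ℝ, gaussianPDFReal m' V'.toNNReal u * stdGaussianCDF (A + B * u) :=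
        integral_const_mul _ _
    _ = gaussianPDFReal 0 (τ ^ 2 + s ^ 2).toNNReal c *
          stdGaussianCDF ((A + B * m') / Real.sqrt (1 + B ^ 2 * V')) := by
        rw [gaussian_cdf_integral m' A B V' hV'pos]
    _ = (1 / Real.sqrt (τ ^ 2 + s ^ 2)) * stdGaussianPDF (c / Real.sqrt (τ ^ 2 + s ^ 2)) *
        stdGaussianCDF ((γ1 + γ2 / s + ρ * s * c / (τ ^ 2 + s ^ 2)) /
          Real.sqrt (1 - ρ ^ 2 * s ^ 2 / (τ ^ 2 + s ^ 2))) := by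
        rw [std_scale _ _ hT, harg, stdGaussianPDF, mul_assoc]
end

section
/- Let n ≥ 1, c_1, …, c_n ∈ ℝ, α ∈ ℝ, and λ ∈ ℝ be such that 1 + λ(c_i − α) > 0 for every i and ∑_{i=1}^n (c_i − α)/(1 + λ(c_i − α)) = 0, and set p_i := 1/(n(1 + λ(c_i − α))). Then for every q = (q_1, …, q_n) with q_i ≥ 0, ∑_{i=1}^n q_i = 1 and ∑_{i=1}^n q_i c_i = α, one has ∏_{i=1}^n q_i ≤ ∏_{i=1}^n p_i. That is, (p_1, …, p_n) maximizes the empirical likelihood ∏_i q_i over the constrained probability simplex. -/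
/-- The empirical likelihood weights `p_i = 1/(n(1 + λ(c_i − α)))` maximize the empirical
likelihood `∏ q_i` over probability vectors `q` satisfying the mean constraint
`∑ q_i c_i = α`. -/
theorem empirical_likelihood_weights_maximize
    (n : ℕ) (hn : 1 ≤ n) (c : Fin n → ℝ) (α lam : ℝ)
    (hpos : ∀ i, 0 < 1 + lam * (c i - α))
    (hsum : ∑ i, (c i - α) / (1 + lam * (c i - α)) = 0)
    (p : Fin n → ℝ) (hp : p = fun i => 1 / (n * (1 + lam * (c i - α)))) :
    ∀ q : Fin n → ℝ, (∀ i, 0 ≤ q i) → (∑ i, q i = 1) → (∑ i, q i * c i = α) →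
      ∏ i, q i ≤ ∏ i, p i := by
  subst hp
  intro q hq0 hq1 hqc
  have hn0 : (0:ℝ) < n := by exact_mod_cast Nat.lt_of_lt_of_le Nat.zero_lt_one hn
  set d : Fin n → ℝ := fun i => 1 + lam * (c i - α) with hd
  set x : Fin n → ℝ := fun i => n * q i * d i with hx
  have hx0 : ∀ i ∈ Finset.univ, (0:ℝ) ≤ x i := fun i _ =>
    mul_nonneg (mul_nonneg hn0.le (hq0 i)) (hpos i).le
  have hw0 : ∀ i ∈ (Finset.univ : Finset (Fin n)), (0:ℝ) ≤ 1 / n := fun i _ => by positivity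
  have hw1 : ∑ _i : Fin n, (1/(n:ℝ)) = 1 := by
    rw [Finset.sum_const, Finset.card_univ, Fintype.card_fin, nsmul_eq_mul]
    field_simp
  have hsx : ∑ i, (1/(n:ℝ)) * x i = 1 := by
    have : ∀ i, (1/(n:ℝ)) * x i = q i + lam * (q i * c i) - lam * α * q i := by
      intro i
      simp only [hx, hd]
      field_simp
      ring
    rw [Finset.sum_congr rfl fun i _ => this i]
    rw [Finset.sum_sub_distrib, Finset.sum_add_distrib, ← Finset.mul_sum, ← Finset.mul_sum, hq1, hqc]
    ring
  have key := Real.geom_mean_le_arith_mean_weighted Finset.univ (fun _ => 1/(n:ℝ)) x hw0 hw1 hx0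
  rw [hsx] at key
  -- key : ∏ i, x i ^ (1/n : ℝ) ≤ 1
  have hxprod : ∏ i, x i ≤ 1 := by
    have h1 : (∏ i, x i ^ ((1:ℝ)/n)) ^ (n:ℕ) ≤ 1 := by
      exact pow_le_one₀ (Finset.prod_nonneg fun i _ => Real.rpow_nonneg (hx0 i (Finset.mem_univ i)) _) key
    have h2 : (∏ i, x i ^ ((1:ℝ)/n)) ^ (n:ℕ) = ∏ i, x i := by
      rw [← Finset.prod_pow]
      refine Finset.prod_congr rfl fun i _ => ?_
      rw [← Real.rpow_natCast (x i ^ ((1:ℝ)/n)) n, ← Real.rpow_mul (hx0 i (Finset.mem_univ i))]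
      rw [one_div, inv_mul_cancel₀ (by positivity : (n:ℝ) ≠ 0), Real.rpow_one]
    rwa [h2] at h1
  -- ∏ x i = (∏ (n * d i)) * ∏ q i, and ∏ p i = 1 / ∏ (n * d i)
  have hprodx : ∏ i, x i = (∏ i, (n:ℝ) * d i) * ∏ i, q i := by
    rw [← Finset.prod_mul_distrib]
    exact Finset.prod_congr rfl fun i _ => by simp [hx]; ring
  have hDpos : 0 < ∏ i, (n:ℝ) * d i :=
    Finset.prod_pos fun i _ => mul_pos hn0 (hpos i)
  have hprodp : ∏ i, 1 / ((n:ℝ) * d i) = 1 / ∏ i, (n:ℝ) * d i := by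
    rw [Finset.prod_div_distrib, Finset.prod_const_one]
  show ∏ i, q i ≤ ∏ i, 1 / ((n:ℝ) * d i)
  rw [hprodp, le_div_iff₀ hDpos, mul_comm, ← hprodx]
  exact hxprod
end

section
/- Block-matrix form of Proposition 1 (V = V_c): Let α0 ∈ (0, 1), φ1 ∈ ℝ with α0 φ1 > 1, φ2 ∈ ℝ² (a 2×1 column vector), and let V_c be an invertible real 5×5 matrix. Define the 4×4 matrix Ṽ_m with 2×2-block structure Ṽ_m = [[A, B], [Bᵀ, C]] where A = [[α0/(1−α0), 1/(1−α0)], [1/(1−α0), (1−φ1)/((1−α0)(1−α0φ1))]], B is the 2×2 matrix whose first row is zero and whose second row is φ2ᵀ/(1−α0φ1), and C = −α0 φ2 φ2ᵀ/(1−α0φ1). Let F1 = (I_4, 0_{4×3}) (4×7) and F2 = (0_{5×2}, I_5) (5×7), and set Ω = F2ᵀ V_c F2 + F1ᵀ Ṽ_m F1 (a 7×7 matrix). Then Ω is invertible and the lower-right 5×5 submatrix of Ω^{−1} equals V_c^{−1}. -/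
open Matrix

/-- The matrix `Ṽ_m` of the full-likelihood information. -/
noncomputable def tildeVm (α0 φ1 : ℝ) (φ2 : Fin 2 → ℝ) : Matrix (Fin 4) (Fin 4) ℝ :=
  !![α0 / (1 - α0), 1 / (1 - α0), 0, 0;
     1 / (1 - α0), (1 - φ1) / ((1 - α0) * (1 - α0 * φ1)),
       φ2 0 / (1 - α0 * φ1), φ2 1 / (1 - α0 * φ1);
     0, φ2 0 / (1 - α0 * φ1),
       -(α0 * (φ2 0 * φ2 0)) / (1 - α0 * φ1), -(α0 * (φ2 0 * φ2 1)) / (1 - α0 * φ1);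
     0, φ2 1 / (1 - α0 * φ1),
       -(α0 * (φ2 1 * φ2 0)) / (1 - α0 * φ1), -(α0 * (φ2 1 * φ2 1)) / (1 - α0 * φ1)]

/-- `F1 = (I_4, 0_{4×3})`. -/
def matF1 : Matrix (Fin 4) (Fin 7) ℝ :=
  Matrix.of fun i j => if (j : ℕ) = (i : ℕ) then 1 else 0

/-- `F2 = (0_{5×2}, I_5)`. -/
def matF2 : Matrix (Fin 5) (Fin 7) ℝ :=
  Matrix.of fun i j => if (j : ℕ) = (i : ℕ) + 2 then 1 else 0

/-- The full-likelihood information matrix `Ω = F2ᵀ V_c F2 + F1ᵀ Ṽ_m F1`. -/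
noncomputable def fullInfo (α0 φ1 : ℝ) (φ2 : Fin 2 → ℝ) (Vc : Matrix (Fin 5) (Fin 5) ℝ) :
    Matrix (Fin 7) (Fin 7) ℝ :=
  matF2ᵀ * Vc * matF2 + matF1ᵀ * tildeVm α0 φ1 φ2 * matF1

/-! ### Auxiliary matrices -/

/-- Projection on the first two coordinates. -/
def matE : Matrix (Fin 2) (Fin 7) ℝ :=
  Matrix.of fun i j => if (j : ℕ) = (i : ℕ) then 1 else 0

/-- Top-left `2×2` block `A` of `Ṽ_m`. -/
noncomputable def matA (α0 φ1 : ℝ) : Matrix (Fin 2) (Fin 2) ℝ :=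
  !![α0 / (1 - α0), 1 / (1 - α0);
     1 / (1 - α0), (1 - φ1) / ((1 - α0) * (1 - α0 * φ1))]

/-- Explicit inverse of `A`. -/
noncomputable def matA' (α0 φ1 : ℝ) : Matrix (Fin 2) (Fin 2) ℝ :=
  !![-(1 - φ1), 1 - α0 * φ1;
     1 - α0 * φ1, -(α0 * (1 - α0 * φ1))]

/-- `A` padded to `4×4`. -/
noncomputable def matA4 (α0 φ1 : ℝ) : Matrix (Fin 4) (Fin 4) ℝ :=
  !![α0 / (1 - α0), 1 / (1 - α0), 0, 0;
     1 / (1 - α0), (1 - φ1) / ((1 - α0) * (1 - α0 * φ1)), 0, 0;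
     0, 0, 0, 0;
     0, 0, 0, 0]

/-- The unit upper-triangular factor at the `4×4` level. -/
noncomputable def matL4 (α0 : ℝ) (φ2 : Fin 2 → ℝ) : Matrix (Fin 4) (Fin 4) ℝ :=
  !![1, 0, φ2 0, φ2 1;
     0, 1, -(α0 * φ2 0), -(α0 * φ2 1);
     0, 0, 1, 0;
     0, 0, 0, 1]

/-- `K = A⁻¹ B`, padded to `2×5`. -/
noncomputable def matK (α0 : ℝ) (φ2 : Fin 2 → ℝ) : Matrix (Fin 2) (Fin 5) ℝ :=
  !![φ2 0, φ2 1, 0, 0, 0;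
     -(α0 * φ2 0), -(α0 * φ2 1), 0, 0, 0]

/-- Unit upper-triangular factor at the `7×7` level. -/
noncomputable def matL (α0 : ℝ) (φ2 : Fin 2 → ℝ) : Matrix (Fin 7) (Fin 7) ℝ :=
  1 + matEᵀ * matK α0 φ2 * matF2

/-- Inverse of `matL`. -/
noncomputable def matL' (α0 : ℝ) (φ2 : Fin 2 → ℝ) : Matrix (Fin 7) (Fin 7) ℝ :=
  1 - matEᵀ * matK α0 φ2 * matF2

/-- Block-diagonal part `diag(A, Vc)`. -/
noncomputable def matD (α0 φ1 : ℝ) (Vc : Matrix (Fin 5) (Fin 5) ℝ) :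
    Matrix (Fin 7) (Fin 7) ℝ :=
  matEᵀ * matA α0 φ1 * matE + matF2ᵀ * Vc * matF2

/-- Inverse of `matD`. -/
noncomputable def matD' (α0 φ1 : ℝ) (Vc : Matrix (Fin 5) (Fin 5) ℝ) :
    Matrix (Fin 7) (Fin 7) ℝ :=
  matEᵀ * matA' α0 φ1 * matE + matF2ᵀ * Vc⁻¹ * matF2

/-! ### Structural lemmas for the projections -/

lemma hEE : matE * matEᵀ = 1 := by
  ext i j; fin_cases i <;> fin_cases j <;>
    simp (config := { decide := true }) [matE, mul_apply, Fin.sum_univ_seven, Matrix.one_apply]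

lemma hFF : matF2 * matF2ᵀ = 1 := by
  ext i j; fin_cases i <;> fin_cases j <;>
    simp (config := { decide := true }) [matF2, mul_apply, Fin.sum_univ_seven, Matrix.one_apply]

lemma hFE : matF2 * matEᵀ = 0 := by
  ext i j; fin_cases i <;> fin_cases j <;>
    simp (config := { decide := true }) [matF2, matE, mul_apply, Fin.sum_univ_seven]

lemma hEF : matE * matF2ᵀ = 0 := by
  ext i j; fin_cases i <;> fin_cases j <;>
    simp (config := { decide := true }) [matF2, matE, mul_apply, Fin.sum_univ_seven]

lemma hId : matEᵀ * matE + matF2ᵀ * matF2 = 1 := by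
  ext i j; fin_cases i <;> fin_cases j <;>
    simp (config := { decide := true }) [matF2, matE, mul_apply, Fin.sum_univ_two,
      Fin.sum_univ_five, Matrix.one_apply]

lemma hsub (M : Matrix (Fin 7) (Fin 7) ℝ) :
    M.submatrix (fun i : Fin 5 => i.addNat 2) (fun j : Fin 5 => j.addNat 2)
      = matF2 * M * matF2ᵀ := by
  ext i j
  fin_cases i <;> fin_cases j <;>
    simp (config := { decide := true }) [matF2, mul_apply, Fin.sum_univ_seven] <;> rfl

/-- Associativity helpers. -/
lemma hEE' {n : ℕ} (M : Matrix (Fin 2) (Fin n) ℝ) : matE * (matEᵀ * M) = M := by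
  rw [← Matrix.mul_assoc, hEE, Matrix.one_mul]

lemma hFF' {n : ℕ} (M : Matrix (Fin 5) (Fin n) ℝ) : matF2 * (matF2ᵀ * M) = M := by
  rw [← Matrix.mul_assoc, hFF, Matrix.one_mul]

lemma hFE' {n : ℕ} (M : Matrix (Fin 2) (Fin n) ℝ) : matF2 * (matEᵀ * M) = 0 := by
  rw [← Matrix.mul_assoc, hFE, Matrix.zero_mul]

lemma hEF' {n : ℕ} (M : Matrix (Fin 5) (Fin n) ℝ) : matE * (matF2ᵀ * M) = 0 := by
  rw [← Matrix.mul_assoc, hEF, Matrix.zero_mul]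

/-! ### Concrete block computations -/

set_option maxHeartbeats 1600000 in
lemma hAA' (α0 φ1 : ℝ) (ha : (1:ℝ) - α0 ≠ 0) (hb : (1:ℝ) - α0 * φ1 ≠ 0) :
    matA α0 φ1 * matA' α0 φ1 = 1 := by
  ext i j; fin_cases i <;> fin_cases j <;>
    · rw [mul_apply]
      simp only [Fin.sum_univ_two]
      norm_num [matA, matA', Matrix.one_apply, Matrix.vecHead, Matrix.vecTail]
      try field_simp
      try ring

set_option maxHeartbeats 1600000 in
lemma hA'A (α0 φ1 : ℝ) (ha : (1:ℝ) - α0 ≠ 0) (hb : (1:ℝ) - α0 * φ1 ≠ 0) :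
    matA' α0 φ1 * matA α0 φ1 = 1 := by
  have hb' : (1:ℝ) - φ1 * α0 ≠ 0 := by rwa [mul_comm]
  ext i j; fin_cases i <;> fin_cases j <;>
    · rw [mul_apply]
      simp only [Fin.sum_univ_two]
      norm_num [matA, matA', Matrix.one_apply, Matrix.vecHead, Matrix.vecTail]
      try field_simp
      try ring

set_option maxHeartbeats 1600000 in
lemma hKey4 (α0 φ1 : ℝ) (φ2 : Fin 2 → ℝ) (ha : (1:ℝ) - α0 ≠ 0) (hb : (1:ℝ) - α0 * φ1 ≠ 0) :
    tildeVm α0 φ1 φ2 = (matL4 α0 φ2)ᵀ * matA4 α0 φ1 * matL4 α0 φ2 := by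
  have hb' : (1:ℝ) - φ1 * α0 ≠ 0 := by rwa [mul_comm]
  ext i j; fin_cases i <;> fin_cases j <;>
    · rw [mul_apply]
      simp only [Fin.sum_univ_four, mul_apply, transpose_apply]
      norm_num [tildeVm, matL4, matA4, Matrix.vecHead, Matrix.vecTail, Matrix.cons_val, Matrix.cons_val_two, Matrix.cons_val_three]
      try field_simp
      try ring

set_option maxHeartbeats 1600000 in
lemma hFL (α0 : ℝ) (φ2 : Fin 2 → ℝ) :
    matF1 * matL α0 φ2 = matL4 α0 φ2 * matF1 := by
  ext i j; fin_cases i <;> fin_cases j <;>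
    · rw [mul_apply, mul_apply]
      simp only [Fin.sum_univ_seven, Fin.sum_univ_five, Fin.sum_univ_four, Fin.sum_univ_two,
        matL, Matrix.add_apply, Matrix.one_apply, mul_apply, transpose_apply]
      simp (config := { decide := true }) [matF1, matF2, matE, matK, matL4,
        Matrix.vecHead, Matrix.vecTail]

set_option maxHeartbeats 1600000 in
lemma hEAE (α0 φ1 : ℝ) :
    matF1ᵀ * matA4 α0 φ1 * matF1 = matEᵀ * matA α0 φ1 * matE := by
  ext i j; fin_cases i <;> fin_cases j <;>
    · rw [mul_apply, mul_apply]
      simp only [Fin.sum_univ_four, Fin.sum_univ_two, Fin.sum_univ_seven, mul_apply,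
        transpose_apply]
      norm_num [matF1, matE, matA, matA4, Matrix.vecHead, Matrix.vecTail, Matrix.cons_val, Matrix.cons_val_two, Matrix.cons_val_three]

/-! ### Factorisation lemmas -/

lemma hX2 (α0 : ℝ) (φ2 : Fin 2 → ℝ) :
    (matEᵀ * matK α0 φ2 * matF2) * (matEᵀ * matK α0 φ2 * matF2) = 0 := by
  have h : (matEᵀ * matK α0 φ2 * matF2) * (matEᵀ * matK α0 φ2 * matF2)
      = matEᵀ * (matK α0 φ2 * (matF2 * (matEᵀ * (matK α0 φ2 * matF2)))) := by
    simp only [Matrix.mul_assoc]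
  rw [h, hFE', Matrix.mul_zero, Matrix.mul_zero]

lemma hLL' (α0 : ℝ) (φ2 : Fin 2 → ℝ) : matL α0 φ2 * matL' α0 φ2 = 1 := by
  have h : matL α0 φ2 * matL' α0 φ2
      = 1 - (matEᵀ * matK α0 φ2 * matF2) * (matEᵀ * matK α0 φ2 * matF2) := by
    simp only [matL, matL']; noncomm_ring
  rw [h, hX2, sub_zero]

lemma hL'L (α0 : ℝ) (φ2 : Fin 2 → ℝ) : matL' α0 φ2 * matL α0 φ2 = 1 := by
  have h : matL' α0 φ2 * matL α0 φ2
      = 1 - (matEᵀ * matK α0 φ2 * matF2) * (matEᵀ * matK α0 φ2 * matF2) := by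
    simp only [matL, matL']; noncomm_ring
  rw [h, hX2, sub_zero]

lemma hF2L (α0 : ℝ) (φ2 : Fin 2 → ℝ) : matF2 * matL α0 φ2 = matF2 := by
  simp only [matL, Matrix.mul_add, Matrix.mul_one, Matrix.mul_assoc, hFE', add_zero]

lemma hF2L' (α0 : ℝ) (φ2 : Fin 2 → ℝ) : matF2 * matL' α0 φ2 = matF2 := by
  simp only [matL', Matrix.mul_sub, Matrix.mul_one, Matrix.mul_assoc, hFE', sub_zero]

lemma hDD' (α0 φ1 : ℝ) (Vc : Matrix (Fin 5) (Fin 5) ℝ)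
    (ha : (1:ℝ) - α0 ≠ 0) (hb : (1:ℝ) - α0 * φ1 ≠ 0) (hVc : IsUnit Vc.det) :
    matD α0 φ1 Vc * matD' α0 φ1 Vc = 1 := by
  have hAA'' : ∀ (M : Matrix (Fin 2) (Fin 7) ℝ),
      matA α0 φ1 * (matA' α0 φ1 * M) = M := fun M => by
    rw [← Matrix.mul_assoc, hAA' α0 φ1 ha hb, Matrix.one_mul]
  have hVW : ∀ (M : Matrix (Fin 5) (Fin 7) ℝ), Vc * (Vc⁻¹ * M) = M := fun M => by
    rw [← Matrix.mul_assoc, Matrix.mul_nonsing_inv Vc hVc, Matrix.one_mul]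
  simp only [matD, matD', Matrix.add_mul, Matrix.mul_add, Matrix.mul_assoc, hEE', hEF', hFE',
    hFF', Matrix.mul_zero, Matrix.zero_mul, add_zero, zero_add, hAA'', hVW]
  exact hId

lemma hMain (α0 φ1 : ℝ) (φ2 : Fin 2 → ℝ) (Vc : Matrix (Fin 5) (Fin 5) ℝ)
    (ha : (1:ℝ) - α0 ≠ 0) (hb : (1:ℝ) - α0 * φ1 ≠ 0) :
    fullInfo α0 φ1 φ2 Vc = (matL α0 φ2)ᵀ * matD α0 φ1 Vc * matL α0 φ2 := by
  have h2 : (matL α0 φ2)ᵀ * (matF2ᵀ * Vc * matF2) * matL α0 φ2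
      = matF2ᵀ * Vc * matF2 := by
    calc (matL α0 φ2)ᵀ * (matF2ᵀ * Vc * matF2) * matL α0 φ2
        = (matF2 * matL α0 φ2)ᵀ * Vc * (matF2 * matL α0 φ2) := by
          rw [Matrix.transpose_mul]; simp only [Matrix.mul_assoc]
      _ = matF2ᵀ * Vc * matF2 := by rw [hF2L]
  have h1 : (matL α0 φ2)ᵀ * (matEᵀ * matA α0 φ1 * matE) * matL α0 φ2
      = matF1ᵀ * tildeVm α0 φ1 φ2 * matF1 := by
    calc (matL α0 φ2)ᵀ * (matEᵀ * matA α0 φ1 * matE) * matL α0 φ2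
        = (matL α0 φ2)ᵀ * (matF1ᵀ * matA4 α0 φ1 * matF1) * matL α0 φ2 := by
          rw [hEAE]
      _ = (matF1 * matL α0 φ2)ᵀ * matA4 α0 φ1 * (matF1 * matL α0 φ2) := by
          rw [Matrix.transpose_mul]; simp only [Matrix.mul_assoc]
      _ = (matL4 α0 φ2 * matF1)ᵀ * matA4 α0 φ1 * (matL4 α0 φ2 * matF1) := by
          rw [hFL]
      _ = matF1ᵀ * ((matL4 α0 φ2)ᵀ * matA4 α0 φ1 * matL4 α0 φ2) * matF1 := by
          rw [Matrix.transpose_mul]; simp only [Matrix.mul_assoc]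
      _ = matF1ᵀ * tildeVm α0 φ1 φ2 * matF1 := by rw [← hKey4 α0 φ1 φ2 ha hb]
  rw [fullInfo, matD, Matrix.mul_add, Matrix.add_mul, h1, h2, add_comm]

/-- Proposition 1 (V = V_c), block-matrix form: `Ω` is invertible and the lower-right
`5×5` submatrix of `Ω⁻¹` equals `V_c⁻¹`. -/
theorem full_info_inverse_lower_right_block
    (α0 φ1 : ℝ) (φ2 : Fin 2 → ℝ) (Vc : Matrix (Fin 5) (Fin 5) ℝ)
    (hα : α0 ∈ Set.Ioo (0 : ℝ) 1) (hφ : 1 < α0 * φ1) (hVc : IsUnit Vc.det) :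
    IsUnit (fullInfo α0 φ1 φ2 Vc).det ∧
    ((fullInfo α0 φ1 φ2 Vc)⁻¹).submatrix
        (fun i : Fin 5 => i.addNat 2) (fun j : Fin 5 => j.addNat 2) = Vc⁻¹ := by
  obtain ⟨h0, h1⟩ := hα
  have ha : (1:ℝ) - α0 ≠ 0 := by linarith
  have hb : (1:ℝ) - α0 * φ1 ≠ 0 := by linarith
  have hRight : fullInfo α0 φ1 φ2 Vc * (matL' α0 φ2 * matD' α0 φ1 Vc * (matL' α0 φ2)ᵀ) = 1 := by
    rw [hMain α0 φ1 φ2 Vc ha hb]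
    calc (matL α0 φ2)ᵀ * matD α0 φ1 Vc * matL α0 φ2
          * (matL' α0 φ2 * matD' α0 φ1 Vc * (matL' α0 φ2)ᵀ)
        = (matL α0 φ2)ᵀ * (matD α0 φ1 Vc * ((matL α0 φ2 * matL' α0 φ2)
            * (matD' α0 φ1 Vc * (matL' α0 φ2)ᵀ))) := by
          simp only [Matrix.mul_assoc]
      _ = (matL α0 φ2)ᵀ * (matD α0 φ1 Vc * (matD' α0 φ1 Vc * (matL' α0 φ2)ᵀ)) := by
          rw [hLL', Matrix.one_mul]
      _ = (matL α0 φ2)ᵀ * ((matD α0 φ1 Vc * matD' α0 φ1 Vc) * (matL' α0 φ2)ᵀ) := by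
          rw [Matrix.mul_assoc]
      _ = (matL α0 φ2)ᵀ * (matL' α0 φ2)ᵀ := by
          rw [hDD' α0 φ1 Vc ha hb hVc, Matrix.one_mul]
      _ = (matL' α0 φ2 * matL α0 φ2)ᵀ := (Matrix.transpose_mul _ _).symm
      _ = 1 := by rw [hL'L, Matrix.transpose_one]
  have hdet : IsUnit (fullInfo α0 φ1 φ2 Vc).det :=
    Matrix.isUnit_det_of_right_inverse hRight
  have hinv : (fullInfo α0 φ1 φ2 Vc)⁻¹ = matL' α0 φ2 * matD' α0 φ1 Vc * (matL' α0 φ2)ᵀ :=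
    Matrix.inv_eq_right_inv hRight
  refine ⟨hdet, ?_⟩
  rw [hsub, hinv]
  calc matF2 * (matL' α0 φ2 * matD' α0 φ1 Vc * (matL' α0 φ2)ᵀ) * matF2ᵀ
      = (matF2 * matL' α0 φ2) * matD' α0 φ1 Vc * (matF2 * matL' α0 φ2)ᵀ := by
        rw [Matrix.transpose_mul]; simp only [Matrix.mul_assoc]
    _ = matF2 * matD' α0 φ1 Vc * matF2ᵀ := by rw [hF2L']
    _ = Vc⁻¹ := by
        simp only [matD', Matrix.mul_add, Matrix.add_mul, Matrix.mul_assoc, hFE', hFF',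
          Matrix.zero_mul, zero_add, Matrix.mul_zero, add_zero, hFF, Matrix.mul_one]
end

section
/- Schur-complement step for Proposition 1: With α0 ∈ (0, 1), φ1 ∈ ℝ satisfying α0 φ1 > 1, φ2 ∈ ℝ², and V_c any real 5×5 matrix, write the 7×7 matrix Ω = F2ᵀ V_c F2 + F1ᵀ Ṽ_m F1 (with Ṽ_m, F1, F2 as below) in 2+5 block form Ω = [[A, B], [Bᵀ, D]], where A is its upper-left 2×2 block, B its upper-right 2×5 block, and D its lower-right 5×5 block. Then A is invertible and the Schur complement D − Bᵀ A^{−1} B equals V_c. Here Ṽ_m = [[A, B₀], [B₀ᵀ, C]] with A = [[α0/(1−α0), 1/(1−α0)], [1/(1−α0), (1−φ1)/((1−α0)(1−α0φ1))]], B₀ the 2×2 matrix with zero first row and second row φ2ᵀ/(1−α0φ1), C = −α0 φ2 φ2ᵀ/(1−α0φ1), F1 = (I_4, 0_{4×3}), F2 = (0_{5×2}, I_5). -/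
open Matrix

set_option maxHeartbeats 2000000 in
/-- Schur-complement step for Proposition 1: writing `Ω` in `2+5` block form
`[[A, B], [Bᵀ, D]]`, the block `A` is invertible and the Schur complement
`D − Bᵀ A⁻¹ B` equals `V_c`. -/
theorem full_info_schur_complement
    (α0 φ1 : ℝ) (φ2 : Fin 2 → ℝ) (Vc : Matrix (Fin 5) (Fin 5) ℝ)
    (hα : α0 ∈ Set.Ioo (0 : ℝ) 1) (hφ : 1 < α0 * φ1) :
    letI Om := fullInfo α0 φ1 φ2 Vc
    letI A : Matrix (Fin 2) (Fin 2) ℝ :=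
      Om.submatrix (Fin.castLE (by norm_num : (2 : ℕ) ≤ 7))
        (Fin.castLE (by norm_num : (2 : ℕ) ≤ 7))
    letI B : Matrix (Fin 2) (Fin 5) ℝ :=
      Om.submatrix (Fin.castLE (by norm_num : (2 : ℕ) ≤ 7)) (fun j : Fin 5 => j.addNat 2)
    letI D : Matrix (Fin 5) (Fin 5) ℝ :=
      Om.submatrix (fun i : Fin 5 => i.addNat 2) (fun j : Fin 5 => j.addNat 2)
    IsUnit A.det ∧ D - Bᵀ * A⁻¹ * B = Vc := by
  obtain ⟨hα0, hα1⟩ := hα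
  have h1 : (1 : ℝ) - α0 ≠ 0 := by linarith
  have h2 : (1 : ℝ) - α0 * φ1 ≠ 0 := by linarith
  set A : Matrix (Fin 2) (Fin 2) ℝ :=
    (fullInfo α0 φ1 φ2 Vc).submatrix (Fin.castLE (by norm_num : (2:ℕ) ≤ 7))
      (Fin.castLE (by norm_num : (2:ℕ) ≤ 7)) with hAdef
  set B : Matrix (Fin 2) (Fin 5) ℝ :=
    (fullInfo α0 φ1 φ2 Vc).submatrix (Fin.castLE (by norm_num : (2:ℕ) ≤ 7))
      (fun j : Fin 5 => j.addNat 2) with hBdef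
  set D : Matrix (Fin 5) (Fin 5) ℝ :=
    (fullInfo α0 φ1 φ2 Vc).submatrix (fun i : Fin 5 => i.addNat 2)
      (fun j : Fin 5 => j.addNat 2) with hDdef
  have hA : A = !![α0 / (1 - α0), 1 / (1 - α0);
      1 / (1 - α0), (1 - φ1) / ((1 - α0) * (1 - α0 * φ1))] := by
    ext i j
    fin_cases i <;> fin_cases j <;>
      simp (config := { decide := true }) [hAdef, fullInfo, matF1, matF2, tildeVm, Matrix.mul_apply,
        Fin.sum_univ_seven, Fin.sum_univ_four, Fin.sum_univ_five]
  have hB : B = !![(0 : ℝ), 0, 0, 0, 0;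
      φ2 0 / (1 - α0 * φ1), φ2 1 / (1 - α0 * φ1), 0, 0, 0] := by
    ext i j
    fin_cases i <;> fin_cases j <;>
      simp (config := { decide := true }) [hBdef, fullInfo, matF1, matF2, tildeVm, Matrix.mul_apply,
        Fin.sum_univ_seven, Fin.sum_univ_four, Fin.sum_univ_five]
  have hD : D = Vc + !![-(α0 * (φ2 0 * φ2 0)) / (1 - α0 * φ1),
      -(α0 * (φ2 0 * φ2 1)) / (1 - α0 * φ1), 0, 0, 0;
      -(α0 * (φ2 1 * φ2 0)) / (1 - α0 * φ1),
      -(α0 * (φ2 1 * φ2 1)) / (1 - α0 * φ1), 0, 0, 0;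
      0, 0, 0, 0, 0; 0, 0, 0, 0, 0; 0, 0, 0, 0, 0] := by
    ext i j
    fin_cases i <;> fin_cases j <;>
      simp (config := { decide := true }) [hDdef, fullInfo, matF1, matF2, tildeVm, Matrix.mul_apply,
        Fin.sum_univ_seven, Fin.sum_univ_four, Fin.sum_univ_five,
        Matrix.vecHead, Matrix.vecTail]
  clear_value A B D
  clear hAdef hBdef hDdef
  have hdet : A.det = -(1 / ((1 - α0) * (1 - α0 * φ1))) := by
    rw [hA, Matrix.det_fin_two_of]
    field_simp
    ring
  have hdet' : IsUnit A.det := by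
    rw [hdet, isUnit_iff_ne_zero]
    intro h
    apply h1
    have := neg_eq_zero.mp h
    rcases (div_eq_zero_iff.mp this) with h | h
    · norm_num at h
    · rcases mul_eq_zero.mp h with h | h
      · exact h
      · exact absurd h h2
  refine ⟨hdet', ?_⟩
  have hAinv : A⁻¹ = !![φ1 - 1, 1 - α0 * φ1; 1 - α0 * φ1, -(α0 * (1 - α0 * φ1))] := by
    apply Matrix.inv_eq_right_inv
    rw [hA]
    ext i j
    fin_cases i <;> fin_cases j <;>
        simp [Matrix.mul_apply, Fin.sum_univ_two, Matrix.one_apply] <;>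
        field_simp <;> ring
  rw [hD, hAinv, hB]
  ext i j
  fin_cases i <;> fin_cases j <;>
      (try simp [Matrix.mul_apply, Fin.sum_univ_two, Matrix.transpose_apply,
        Matrix.vecHead, Matrix.vecTail]) <;>
      (try field_simp) <;> (try ring)
end
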